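/- Let μ be a refining Möbius map (maps [-1,1] into itself, denominator nonzero on [-1,1]) and define diam(μ) = |μ(-1) - μ(1)|. If diam(μ) < 1/3, then there exists φ ∈ {L, R, M} such that μ([-1,1]) ⊆ φ([-1,1]), where L(x)=(x-1)/(x+3), R(x)=(x+1)/(-x+3), M(x)=x/3. -/

import Mathlib

noncomputable def digitL : ℝ → ℝ := fun x => (x - 1) / (x + 3)
noncomputable def digitR : ℝ → ℝ := fun x => (x + 1) / (-x + 3)
noncomputable def digitM : ℝ → ℝ := fun x => x / 3

lemma memL {y : ℝ} (h : y ∈ Set.Icc (-1 : ℝ) 0) :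
    y ∈ digitL '' Set.Icc (-1 : ℝ) 1 := by
  obtain ⟨h1, h2⟩ := h
  have hpos : (0:ℝ) < 1 - y := by nlinarith
  refine ⟨(3 * y + 1) / (1 - y), ⟨?_, ?_⟩, ?_⟩
  · rw [le_div_iff₀ hpos]; nlinarith
  · rw [div_le_iff₀ hpos]; nlinarith
  · simp only [digitL]
    have hnum : (3 * y + 1) / (1 - y) - 1 = 4 * y / (1 - y) := by
      field_simp; ring
    have hden : (3 * y + 1) / (1 - y) + 3 = 4 / (1 - y) := by
      field_simp; ring
    rw [hnum, hden, div_div_div_cancel_right₀]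
    · rw [div_eq_iff (by norm_num)]; ring
    · exact hpos.ne'

lemma memR {y : ℝ} (h : y ∈ Set.Icc (0 : ℝ) 1) :
    y ∈ digitR '' Set.Icc (-1 : ℝ) 1 := by
  obtain ⟨h1, h2⟩ := h
  refine ⟨(3 * y - 1) / (1 + y), ⟨?_, ?_⟩, ?_⟩
  · rw [le_div_iff₀ (by nlinarith : (0:ℝ) < 1 + y)]; nlinarith
  · rw [div_le_iff₀ (by nlinarith : (0:ℝ) < 1 + y)]; nlinarith
  · simp only [digitR]
    have hpos : (0:ℝ) < 1 + y := by nlinarith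
    have hnum : (3 * y - 1) / (1 + y) + 1 = 4 * y / (1 + y) := by
      field_simp; ring
    have hden : -((3 * y - 1) / (1 + y)) + 3 = 4 / (1 + y) := by
      field_simp; ring
    rw [hnum, hden, div_div_div_cancel_right₀]
    · rw [div_eq_iff (by norm_num)]; ring
    · exact hpos.ne'

lemma memM {y : ℝ} (h : y ∈ Set.Icc (-(1/3) : ℝ) (1/3)) :
    y ∈ digitM '' Set.Icc (-1 : ℝ) 1 := by
  obtain ⟨h1, h2⟩ := h
  exact ⟨3 * y, ⟨by linarith, by linarith⟩, by simp [digitM]⟩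

theorem small_diameter_emits (a b c d : ℝ)
    (hb : ∀ x ∈ Set.Icc (-1 : ℝ) 1, c * x + d ≠ 0)
    (hr : ∀ x ∈ Set.Icc (-1 : ℝ) 1, (a * x + b) / (c * x + d) ∈ Set.Icc (-1 : ℝ) 1)
    (hdiam : |(a * (-1) + b) / (c * (-1) + d) - (a * 1 + b) / (c * 1 + d)| < 1 / 3) :
    ∃ φ ∈ ({digitL, digitR, digitM} : Set (ℝ → ℝ)),
      ∀ x ∈ Set.Icc (-1 : ℝ) 1, (a * x + b) / (c * x + d) ∈ φ '' Set.Icc (-1 : ℝ) 1 := by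
  set f : ℝ → ℝ := fun x => (a * x + b) / (c * x + d) with hf
  -- denominators have constant sign on [-1,1]
  have hDpos : ∀ x ∈ Set.Icc (-1 : ℝ) 1, ∀ y ∈ Set.Icc (-1 : ℝ) 1,
      0 < (c * x + d) * (c * y + d) := by
    intro x hx y hy
    by_cases hc : c = 0
    · subst hc
      have hd : d ≠ 0 := by simpa using hb 0 ⟨by norm_num, by norm_num⟩
      simp only [zero_mul, zero_add]
      exact mul_self_pos.mpr hd
    · set t0 : ℝ := -d / c with ht0
      have hzero : c * t0 + d = 0 := by rw [ht0]; field_simp; ring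
      have hnot : t0 ∉ Set.Icc (-1 : ℝ) 1 := fun h => hb t0 h hzero
      have hx' : c * x + d = c * (x - t0) := by linear_combination hzero
      have hy' : c * y + d = c * (y - t0) := by linear_combination hzero
      rw [hx', hy']
      obtain ⟨hx1, hx2⟩ := hx
      obtain ⟨hy1, hy2⟩ := hy
      rcases lt_or_ge t0 (-1) with h | h
      · nlinarith [mul_self_pos.mpr hc,
          mul_pos (show (0:ℝ) < x - t0 by linarith) (show (0:ℝ) < y - t0 by linarith)]
      · have h1 : 1 < t0 := by
          rcases lt_or_ge 1 t0 with h' | h'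
          · exact h'
          · exact absurd ⟨h, h'⟩ hnot
        nlinarith [mul_self_pos.mpr hc,
          mul_pos (show (0:ℝ) < t0 - x by linarith) (show (0:ℝ) < t0 - y by linarith)]
  have hkey : ∀ x ∈ Set.Icc (-1 : ℝ) 1, ∀ y ∈ Set.Icc (-1 : ℝ) 1,
      f x - f y = ((a * d - b * c) * (x - y)) / ((c * x + d) * (c * y + d)) := by
    intro x hx y hy
    have hx0 := hb x hx
    have hy0 := hb y hy
    simp only [hf]
    rw [div_sub_div _ _ hx0 hy0]
    ring
  have hm1 : (-1 : ℝ) ∈ Set.Icc (-1 : ℝ) 1 := ⟨le_refl _, by norm_num⟩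
  have hp1 : (1 : ℝ) ∈ Set.Icc (-1 : ℝ) 1 := ⟨by norm_num, le_refl _⟩
  set e := a * d - b * c with he
  -- f x lies between f(-1) and f(1)
  have hbetween : ∀ x ∈ Set.Icc (-1 : ℝ) 1,
      f x ∈ Set.Icc (min (f (-1)) (f 1)) (max (f (-1)) (f 1)) := by
    intro x hx
    obtain ⟨hx1, hx2⟩ := hx
    rcases le_or_gt 0 e with hep | hen
    · have h1 : f (-1) ≤ f x := by
        have := hkey x ⟨hx1, hx2⟩ (-1) hm1
        have hd := hDpos x ⟨hx1, hx2⟩ (-1) hm1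
        nlinarith [div_nonneg (by nlinarith : (0:ℝ) ≤ e * (x - -1)) hd.le]
      have h2 : f x ≤ f 1 := by
        have := hkey 1 hp1 x ⟨hx1, hx2⟩
        have hd := hDpos 1 hp1 x ⟨hx1, hx2⟩
        nlinarith [div_nonneg (by nlinarith : (0:ℝ) ≤ e * (1 - x)) hd.le]
      exact ⟨le_trans (min_le_left _ _) h1, le_trans h2 (le_max_right _ _)⟩
    · have h1 : f x ≤ f (-1) := by
        have := hkey x ⟨hx1, hx2⟩ (-1) hm1
        have hd := hDpos x ⟨hx1, hx2⟩ (-1) hm1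
        nlinarith [div_nonpos_of_nonpos_of_nonneg (by nlinarith : e * (x - -1) ≤ 0) hd.le]
      have h2 : f 1 ≤ f x := by
        have := hkey 1 hp1 x ⟨hx1, hx2⟩
        have hd := hDpos 1 hp1 x ⟨hx1, hx2⟩
        nlinarith [div_nonpos_of_nonpos_of_nonneg (by nlinarith : e * (1 - x) ≤ 0) hd.le]
      exact ⟨le_trans (min_le_right _ _) h2, le_trans h1 (le_max_left _ _)⟩
  have hfm1 : f (-1) ∈ Set.Icc (-1 : ℝ) 1 := hr (-1) hm1
  have hfp1 : f 1 ∈ Set.Icc (-1 : ℝ) 1 := hr 1 hp1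
  have hdiam' : |f (-1) - f 1| < 1 / 3 := hdiam
  rw [abs_sub_lt_iff] at hdiam'
  set lo := min (f (-1)) (f 1) with hlo
  set hi := max (f (-1)) (f 1) with hhi
  have hlo1 : -1 ≤ lo := le_min hfm1.1 hfp1.1
  have hhi1 : hi ≤ 1 := max_le hfm1.2 hfp1.2
  have hgap : hi - lo < 1 / 3 := by
    rcases le_total (f (-1)) (f 1) with h | h
    · rw [hlo, hhi, min_eq_left h, max_eq_right h]; linarith [hdiam'.2]
    · rw [hlo, hhi, min_eq_right h, max_eq_left h]; linarith [hdiam'.1]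
  rcases le_or_gt hi 0 with hcase | hcase
  · refine ⟨digitL, by simp, fun x hx => ?_⟩
    have h := hbetween x hx
    exact memL ⟨le_trans hlo1 h.1, le_trans h.2 hcase⟩
  · rcases le_or_gt 0 lo with hcase2 | hcase2
    · refine ⟨digitR, by simp, fun x hx => ?_⟩
      have h := hbetween x hx
      exact memR ⟨le_trans hcase2 h.1, le_trans h.2 hhi1⟩
    · refine ⟨digitM, by simp, fun x hx => ?_⟩
      have h := hbetween x hx
      exact memM ⟨by linarith [h.1], by linarith [h.2]⟩
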